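/- arXiv:1006.3703 — 9 statements merged into one kernel-verified Lean document; each statement's English description precedes it below -/
import Mathlib

section
/- For each starting point u in X, there exists v in X such that (i) d(u,v) ≤ φ(u) − φ(v), and (ii) for every x ≠ v, d(v,x) > φ(v) − φ(x). -/
/-- Ekeland's variational principle with nonnegative lower semicontinuous φ
on a complete metric space. -/
theorem stmt_0 {X : Type*} [MetricSpace X] [CompleteSpace X]
    (φ : X → ℝ) (hφ0 : ∀ x, 0 ≤ φ x) (hlsc : LowerSemicontinuous φ)
    (u : X) :
    ∃ v : X, dist u v ≤ φ u - φ v ∧ ∀ x : X, x ≠ v → dist v x > φ v - φ x := by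
  classical
  -- the "slope set" of y
  set S : X → Set X := fun y => {x | φ x + dist x y ≤ φ y} with hS
  have hmem : ∀ y, y ∈ S y := by intro y; simp [hS]
  have hne : ∀ y, (φ '' S y).Nonempty := fun y => ⟨φ y, y, hmem y, rfl⟩
  have hbdd : ∀ y, BddBelow (φ '' S y) := by
    intro y; exact ⟨0, by rintro _ ⟨x, -, rfl⟩; exact hφ0 x⟩
  -- choice of next point
  have hchoice : ∀ (y : X) (n : ℕ), ∃ x ∈ S y,
      φ x < sInf (φ '' S y) + (1/2) ^ n := by
    intro y n
    obtain ⟨a, ⟨x, hx, rfl⟩, ha⟩ := Real.lt_sInf_add_pos (hne y)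
      (ε := (1/2 : ℝ) ^ n) (by positivity)
    exact ⟨x, hx, ha⟩
  choose next hnext1 hnext2 using hchoice
  -- the iterated sequence
  let seq : ℕ → X := fun n => Nat.rec u (fun n x => next x n) n
  have hseq0 : seq 0 = u := rfl
  have hseqS : ∀ n, seq (n + 1) ∈ S (seq n) := fun n => hnext1 (seq n) n
  have hseqI : ∀ n, φ (seq (n + 1)) < sInf (φ '' S (seq n)) + (1/2) ^ n :=
    fun n => hnext2 (seq n) n
  have hstep : ∀ n, dist (seq n) (seq (n + 1)) ≤ φ (seq n) - φ (seq (n + 1)) := by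
    intro n
    have := hseqS n
    simp only [hS, Set.mem_setOf_eq] at this
    rw [dist_comm]; linarith
  -- telescoping distance bound
  have htel : ∀ n m, n ≤ m → dist (seq n) (seq m) ≤ φ (seq n) - φ (seq m) := by
    intro n m hnm
    induction m, hnm using Nat.le_induction with
    | base => simp
    | succ m hnm ih =>
      calc dist (seq n) (seq (m + 1)) ≤ dist (seq n) (seq m) + dist (seq m) (seq (m + 1)) :=
            dist_triangle _ _ _
        _ ≤ (φ (seq n) - φ (seq m)) + (φ (seq m) - φ (seq (m + 1))) :=
            add_le_add ih (hstep m)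
        _ = φ (seq n) - φ (seq (m + 1)) := by ring
  have hanti : Antitone (fun n => φ (seq n)) := by
    apply antitone_nat_of_succ_le
    intro n
    have := hstep n
    have := dist_nonneg (x := seq n) (y := seq (n + 1))
    linarith
  have hbdd' : BddBelow (Set.range fun n => φ (seq n)) :=
    ⟨0, by rintro _ ⟨n, rfl⟩; exact hφ0 _⟩
  set L : ℝ := ⨅ n, φ (seq n) with hL
  have hLtend : Filter.Tendsto (fun n => φ (seq n)) Filter.atTop (nhds L) :=
    tendsto_atTop_ciInf hanti hbdd'
  have hLle : ∀ n, L ≤ φ (seq n) := fun n => ciInf_le hbdd' n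
  -- Cauchy
  have hcauchy : CauchySeq seq := by
    apply cauchySeq_of_le_tendsto_0 (fun n => φ (seq n) - L)
    · intro n m N hn hm
      rcases le_total n m with h | h
      · calc dist (seq n) (seq m) ≤ φ (seq n) - φ (seq m) := htel n m h
          _ ≤ φ (seq N) - L := sub_le_sub (hanti hn) (hLle m)
      · rw [dist_comm]
        calc dist (seq m) (seq n) ≤ φ (seq m) - φ (seq n) := htel m n h
          _ ≤ φ (seq N) - L := sub_le_sub (hanti hm) (hLle n)
    · have : Filter.Tendsto (fun n => φ (seq n) - L) Filter.atTop (nhds (L - L)) :=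
        hLtend.sub tendsto_const_nhds
      simpa using this
  obtain ⟨v, hv⟩ := cauchySeq_tendsto_of_complete hcauchy
  -- key estimate: v ∈ S (seq n) for all n
  have hkey : ∀ n, φ v + dist (seq n) v ≤ φ (seq n) := by
    intro n
    apply le_of_forall_pos_le_add
    intro ε hε
    have h1 : ∀ᶠ m in Filter.atTop, φ v - ε / 2 < φ (seq m) :=
      hv.eventually (hlsc v (φ v - ε / 2) (by linarith))
    have h2 : ∀ᶠ m in Filter.atTop, dist (seq m) v < ε / 2 :=
      (hv.eventually (Metric.ball_mem_nhds v (show (0:ℝ) < ε/2 by linarith))).mono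
        (fun m hm => by simpa [Metric.mem_ball] using hm)
    have h3 : ∀ᶠ m : ℕ in Filter.atTop, n ≤ m := Filter.eventually_ge_atTop n
    obtain ⟨m, hm1, hm2, hm3⟩ := (h1.and (h2.and h3)).exists
    have := htel n m hm3
    have hd : dist (seq n) v ≤ dist (seq n) (seq m) + dist (seq m) v := dist_triangle _ _ _
    linarith
  have hφv : ∀ n, φ v ≤ φ (seq n) := by
    intro n
    have := hkey n
    have := dist_nonneg (x := seq n) (y := v)
    linarith
  refine ⟨v, ?_, ?_⟩
  · have := hkey 0
    rw [hseq0] at this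
    linarith
  · intro x hx
    by_contra h
    push_neg at h
    -- x ∈ S v, hence x ∈ S (seq n) for all n
    have hxS : ∀ n, φ x ∈ φ '' S (seq n) := by
      intro n
      refine ⟨x, ?_, rfl⟩
      simp only [hS, Set.mem_setOf_eq]
      have hd : dist x (seq n) ≤ dist x v + dist v (seq n) := dist_triangle _ _ _
      have := hkey n
      rw [dist_comm v x] at h
      rw [dist_comm (seq n) v] at this
      linarith
    have hbound : ∀ n : ℕ, dist v x ≤ (1/2 : ℝ) ^ n := by
      intro n
      have hinf : sInf (φ '' S (seq n)) ≤ φ x := csInf_le (hbdd _) (hxS n)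
      have := hseqI n
      have := hφv (n + 1)
      linarith
    have : dist v x ≤ 0 := by
      have htend : Filter.Tendsto (fun n : ℕ => (1/2 : ℝ) ^ n) Filter.atTop (nhds 0) :=
        tendsto_pow_atTop_nhds_zero_of_lt_one (by norm_num) (by norm_num)
      exact ge_of_tendsto' htend hbound
    have : x = v := by
      exact (dist_le_zero.mp this).symm
    exact hx this
end

section
/- For each u in M there exists v in M with u ≤ v such that φ is constant on the set {x ∈ M : v ≤ x}. -/
/-- Brezis–Browder ordering principle: in a sequentially inductive
quasi-ordered set, for each u there is v ≥ u with φ constant on {x : v ≤ x}. -/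
theorem stmt_2 {M : Type*} [Preorder M] (φ : M → ℝ) (hφ0 : ∀ x, 0 ≤ φ x)
    (hind : ∀ s : ℕ → M, (∀ n, s n ≤ s (n + 1)) → ∃ b : M, ∀ n, s n ≤ b)
    (hdec : ∀ x y : M, x ≤ y → φ y ≤ φ x) (u : M) :
    ∃ v : M, u ≤ v ∧ ∀ x : M, v ≤ x → φ x = φ v := by
  set β : M → ℝ := fun x => sInf (φ '' {y | x ≤ y}) with hβ
  have hne : ∀ x : M, (φ '' {y | x ≤ y}).Nonempty := fun x => ⟨φ x, x, le_refl x, rfl⟩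
  have hbdd : ∀ x : M, BddBelow (φ '' {y | x ≤ y}) := fun x =>
    ⟨0, by rintro t ⟨y, -, rfl⟩; exact hφ0 y⟩
  have hβle : ∀ x y : M, x ≤ y → β x ≤ φ y := fun x y hxy =>
    csInf_le (hbdd x) ⟨y, hxy, rfl⟩
  have step : ∀ n : ℕ, ∀ x : M, ∃ y : M, x ≤ y ∧ φ y < β x + 1 / (n + 1) := by
    intro n x
    have hpos : (0 : ℝ) < 1 / (n + 1) := by positivity
    have : sInf (φ '' {y | x ≤ y}) < β x + 1 / (n + 1) := by
      rw [hβ]; linarith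
    obtain ⟨t, ⟨y, hy, rfl⟩, hlt⟩ := (csInf_lt_iff (hbdd x) (hne x)).mp this
    exact ⟨y, hy, hlt⟩
  choose f hf1 hf2 using step
  let s : ℕ → M := fun n => Nat.rec u (fun n x => f n x) n
  have hs : ∀ n, s n ≤ s (n + 1) := fun n => hf1 n (s n)
  obtain ⟨b, hb⟩ := hind s hs
  refine ⟨b, hb 0, fun x hx => ?_⟩
  have hxb : φ x ≤ φ b := hdec b x hx
  have key : ∀ n : ℕ, φ b ≤ φ x + 1 / (n + 1) := by
    intro n
    have h1 : φ b ≤ φ (s (n + 1)) := hdec _ _ (hb (n + 1))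
    have h2 : φ (s (n + 1)) < β (s n) + 1 / (n + 1) := hf2 n (s n)
    have h3 : β (s n) ≤ φ x := hβle (s n) x ((hb n).trans hx)
    linarith
  have hbx : φ b ≤ φ x := by
    refine le_of_forall_pos_le_add fun ε hε => ?_
    obtain ⟨n, hn⟩ := exists_nat_one_div_lt hε
    exact (key n).trans (by linarith)
  linarith
end

section
/- If a sequence (uₙ) in M is ≤-ascending and satisfies (1/2)(φ(uₙ) + β(uₙ)) > φ(uₙ₊₁) for all n, and v is an upper bound of (uₙ), then φ(v) = β(v); that is, v is (≤,φ)-maximal. -/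
/-- If (uₙ) is ascending with (1/2)(φ uₙ + β uₙ) > φ uₙ₊₁ for all n and v
is an upper bound of (uₙ), then φ v = β v, i.e. v is (≤,φ)-maximal. -/
theorem stmt_5 {M : Type*} [Preorder M] (φ : M → ℝ) (hφ0 : ∀ x, 0 ≤ φ x)
    (hdec : ∀ x y : M, x ≤ y → φ y ≤ φ x)
    (β : M → ℝ) (hβ : ∀ v, β v = sInf (φ '' {x : M | v ≤ x}))
    (s : ℕ → M) (hasc : ∀ n, s n ≤ s (n + 1))
    (hstep : ∀ n, (1 / 2) * (φ (s n) + β (s n)) > φ (s (n + 1)))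
    (v : M) (hub : ∀ n, s n ≤ v) :
    φ v = β v := by
  have hbdd : ∀ S : Set M, BddBelow (φ '' S) := by
    intro S
    refine ⟨0, ?_⟩
    rintro y ⟨x, -, rfl⟩
    exact hφ0 x
  set L : ℝ := ⨅ n, φ (s n) with hL
  have hbdd' : BddBelow (Set.range fun n => φ (s n)) := by
    refine ⟨0, ?_⟩
    rintro y ⟨n, rfl⟩
    exact hφ0 _
  have h1 : β v ≤ φ v := by
    rw [hβ]
    exact csInf_le (hbdd _) ⟨v, le_rfl, rfl⟩
  have hφvL : φ v ≤ L := le_ciInf fun n => hdec _ _ (hub n)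
  have hβmono : ∀ n, β (s n) ≤ β v := by
    intro n
    rw [hβ, hβ]
    refine csInf_le_csInf (hbdd _) ⟨φ v, v, le_rfl, rfl⟩ ?_
    exact Set.image_mono fun x hx => le_trans (hub n) hx
  have hLβ : L ≤ β v := by
    refine le_of_forall_pos_le_add fun ε hε => ?_
    have hlt : L < L + ε := by linarith
    obtain ⟨n, hn⟩ := exists_lt_of_ciInf_lt (lt_of_le_of_lt le_rfl hlt : (⨅ n, φ (s n)) < L + ε)
    have h2 : L ≤ φ (s (n + 1)) := ciInf_le hbdd' (n + 1)
    have h3 := hstep n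
    have h4 := hβmono n
    linarith
  linarith
end

section
/- For each u ∈ M there exists a (≤,φ)-maximal v ∈ M with u ≤ v. Moreover, every (≤,φ)-maximal point z is (≤,𝒱)-maximal: z ≤ w implies (z,w) ∈ ⋂𝒱. -/
/-- Uniform maximality principle: under sequential ≤-completeness of 𝒱,
𝒱-selfclosedness of ≤ and (≤,φ)-compatibility of 𝒱, each u admits a
(≤,φ)-maximal v with u ≤ v; moreover every (≤,φ)-maximal point z is
(≤,𝒱)-maximal. -/
theorem stmt_7 {M : Type*} [Preorder M] (φ : M → ℝ) (hφ0 : ∀ x, 0 ≤ φ x)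
    (hdec : ∀ x y : M, x ≤ y → φ y ≤ φ x)
    (𝒱 : Set (Set (M × M)))
    (hcomplete : ∀ s : ℕ → M, (∀ n, s n ≤ s (n + 1)) →
      (∀ V ∈ 𝒱, ∃ N : ℕ, ∀ p q : ℕ, N ≤ p → p ≤ q → (s p, s q) ∈ V) →
      ∃ x : M, ∀ V ∈ 𝒱, ∃ N : ℕ, ∀ n, N ≤ n → (s n, x) ∈ V)
    (hselfclosed : ∀ s : ℕ → M, (∀ n, s n ≤ s (n + 1)) →
      ∀ x : M, (∀ V ∈ 𝒱, ∃ N : ℕ, ∀ n, N ≤ n → (s n, x) ∈ V) →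
      ∀ n, s n ≤ x)
    (hcompat : ∀ V ∈ 𝒱, ∃ δ > (0 : ℝ),
      ∀ x y : M, x ≤ y → φ x - φ y < δ → (x, y) ∈ V) :
    (∀ u : M, ∃ v : M, u ≤ v ∧ ∀ x : M, v ≤ x → φ x = φ v) ∧
    (∀ z : M, (∀ x : M, z ≤ x → φ x = φ z) →
      ∀ w : M, z ≤ w → ∀ V ∈ 𝒱, (z, w) ∈ V) := by

  classical
  constructor
  · intro u
    set I : M → ℝ := fun a => sInf (φ '' {x | a ≤ x}) with hI
    have hne : ∀ a : M, (φ '' {x | a ≤ x}).Nonempty :=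
      fun a => ⟨φ a, a, le_refl a, rfl⟩
    have hbdd : ∀ a : M, BddBelow (φ '' {x | a ≤ x}) := by
      intro a
      refine ⟨0, ?_⟩
      rintro _ ⟨x, -, rfl⟩
      exact hφ0 x
    have hstep : ∀ (a : M) (n : ℕ), ∃ y : M, a ≤ y ∧ φ y < I a + 1/(n+1) := by
      intro a n
      obtain ⟨b, hb, hlt⟩ := Real.lt_sInf_add_pos (hne a)
        (by positivity : (0:ℝ) < 1/(n+1))
      obtain ⟨y, hy, rfl⟩ := hb
      exact ⟨y, hy, hlt⟩
    choose f hf1 hf2 using hstep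
    set s : ℕ → M := fun n => Nat.rec u (fun n x => f x n) n with hs
    have hmono : ∀ n, s n ≤ s (n+1) := fun n => hf1 _ n
    have hchain : Monotone s := monotone_nat_of_le_succ hmono
    have hrangebdd : BddBelow (Set.range fun n => φ (s n)) := by
      refine ⟨0, ?_⟩
      rintro _ ⟨n, rfl⟩
      exact hφ0 _
    set L : ℝ := ⨅ n, φ (s n) with hL
    have hcauchy : ∀ V ∈ 𝒱, ∃ N : ℕ, ∀ p q : ℕ, N ≤ p → p ≤ q → (s p, s q) ∈ V := by
      intro V hV
      obtain ⟨δ, hδ, hVc⟩ := hcompat V hV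
      obtain ⟨n0, hn0⟩ := exists_lt_of_ciInf_lt (lt_add_of_pos_right L hδ)
      refine ⟨n0, fun p q hp hpq => ?_⟩
      refine hVc _ _ (hchain hpq) ?_
      have h1 : φ (s p) ≤ φ (s n0) := hdec _ _ (hchain hp)
      have h2 : L ≤ φ (s q) := ciInf_le hrangebdd q
      linarith
    obtain ⟨x, hx⟩ := hcomplete s hmono hcauchy
    have hub : ∀ n, s n ≤ x := hselfclosed s hmono x hx
    refine ⟨x, hub 0, fun y hxy => ?_⟩
    have hle : φ y ≤ φ x := hdec _ _ hxy
    have hge : φ x ≤ φ y := by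
      refine le_of_forall_pos_le_add (fun ε hε => ?_)
      obtain ⟨n, hn⟩ := exists_nat_one_div_lt hε
      have h1 : φ x ≤ φ (s (n+1)) := hdec _ _ (hub (n+1))
      have h2 : φ (s (n+1)) < I (s n) + 1/(n+1) := hf2 (s n) n
      have h3 : I (s n) ≤ φ y :=
        csInf_le (hbdd _) ⟨y, le_trans (hub n) hxy, rfl⟩
      have h4 : (1:ℝ)/(n+1) < ε := hn
      linarith
    linarith
  · intro z hz w hzw V hV
    obtain ⟨δ, hδ, h⟩ := hcompat V hV
    refine h z w hzw ?_
    rw [hz w hzw]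
    simpa using hδ
end

section
/- For each u ∈ X there exists v ∈ X such that (i) e_λ(u,v) ≤ φ(u) − φ(v) for all λ ∈ Λ, and (ii) for every x ≠ v there exists μ ∈ Λ with e_μ(v,x) > φ(v) − φ(x). -/
open Filter Topology

/-- Variational principle in Fang uniform spaces: under sequential
φ-completeness of E and sequential descending E-lower semicontinuity of φ,
for each u there exists v with e_λ(u,v) ≤ φ(u) − φ(v) for all λ, and for
each x ≠ v some μ with e_μ(v,x) > φ(v) − φ(x). -/
theorem stmt_14 {X : Type*} {Λ : Type*} [Preorder Λ]
    (hdir : ∀ a b : Λ, ∃ c : Λ, a ≤ c ∧ b ≤ c)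
    (e : Λ → X → X → ℝ)
    (hnn : ∀ l x y, 0 ≤ e l x y)
    (hrefl : ∀ l x, e l x x = 0)
    (hsym : ∀ l x y, e l x y = e l y x)
    (hsuff : ∀ x y, (∀ l, e l x y = 0) → x = y)
    (hmono : ∀ l m : Λ, l ≤ m → ∀ x y, e l x y ≤ e m x y)
    (htri : ∀ l : Λ, ∃ m : Λ, l ≤ m ∧ ∀ x y z, e l x z ≤ e m x y + e m y z)
    (φ : X → ℝ) (hφ0 : ∀ x, 0 ≤ φ x)
    (hcomplete : ∀ s : ℕ → X,
      (∀ l : Λ, ∀ ε : ℝ, 0 < ε → ∃ N : ℕ, ∀ i j : ℕ, N ≤ i → i ≤ j →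
        e l (s i) (s j) < ε) →
      (∀ n, φ (s (n + 1)) ≤ φ (s n)) →
      ∃ x : X, ∀ l : Λ, Tendsto (fun n => e l (s n) x) atTop (𝓝 0))
    (hlsc : ∀ (s : ℕ → X) (x : X),
      (∀ l : Λ, Tendsto (fun n => e l (s n) x) atTop (𝓝 0)) →
      (∀ n, φ (s (n + 1)) ≤ φ (s n)) →
      ∀ a : ℝ, Tendsto (fun n => φ (s n)) atTop (𝓝 a) → φ x ≤ a)
    (u : X) :
    ∃ v : X, (∀ l : Λ, e l u v ≤ φ u - φ v) ∧
      ∀ x : X, x ≠ v → ∃ m : Λ, e m v x > φ v - φ x := by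
  classical
  by_cases hΛ : Nonempty Λ
  case neg =>
    refine ⟨u, fun l => absurd ⟨l⟩ hΛ, fun x hx => ?_⟩
    exact absurd (hsuff x u (fun l => absurd ⟨l⟩ hΛ)) hx
  obtain ⟨l₀⟩ := hΛ
  set S : X → Set X := fun x => {y | ∀ l, e l x y ≤ φ x - φ y} with hS
  have hSrefl : ∀ x, x ∈ S x := by
    intro x l; simp [hrefl]
  have hStrans : ∀ x y z, y ∈ S x → z ∈ S y → z ∈ S x := by
    intro x y z hy hz l
    obtain ⟨m, _, hm⟩ := htri l
    calc e l x z ≤ e m x y + e m y z := hm x y z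
      _ ≤ (φ x - φ y) + (φ y - φ z) := add_le_add (hy m) (hz m)
      _ = φ x - φ z := by ring
  have hbdd : ∀ x, BddBelow (φ '' S x) := by
    rintro x
    exact ⟨0, by rintro r ⟨y, -, rfl⟩; exact hφ0 y⟩
  have hstep : ∀ (x : X) (n : ℕ),
      ∃ y, y ∈ S x ∧ φ y < sInf (φ '' S x) + (1/2 : ℝ)^n := by
    intro x n
    have hpos : (0:ℝ) < (1/2 : ℝ)^n := by positivity
    have hne : (φ '' S x).Nonempty := ⟨φ x, ⟨x, hSrefl x, rfl⟩⟩
    obtain ⟨r, hrmem, hr⟩ := Real.lt_sInf_add_pos hne hpos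
    obtain ⟨y, hy, rfl⟩ := hrmem
    exact ⟨y, hy, hr⟩
  let F : X → ℕ → X := fun x n => (hstep x n).choose
  let seq : ℕ → X := fun n => Nat.rec u (fun n x => F x n) n
  have hmem : ∀ n, seq (n+1) ∈ S (seq n) := fun n => (hstep (seq n) n).choose_spec.1
  have hinf : ∀ n, φ (seq (n+1)) < sInf (φ '' S (seq n)) + (1/2 : ℝ)^n :=
    fun n => (hstep (seq n) n).choose_spec.2
  have hdesc : ∀ n, φ (seq (n+1)) ≤ φ (seq n) := by
    intro n
    have h1 := hmem n l₀
    have h2 := hnn l₀ (seq n) (seq (n+1))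
    linarith
  have hchain : ∀ m n, m ≤ n → seq n ∈ S (seq m) := by
    intro m n hmn
    induction n, hmn using Nat.le_induction with
    | base => exact hSrefl _
    | succ n hmn ih => exact hStrans _ _ _ ih (hmem n)
  have hanti : Antitone (fun n => φ (seq n)) := antitone_nat_of_succ_le hdesc
  have hbdd' : BddBelow (Set.range fun n => φ (seq n)) :=
    ⟨0, by rintro r ⟨n, rfl⟩; exact hφ0 _⟩
  set a : ℝ := ⨅ n, φ (seq n) with ha_def
  have ha : Tendsto (fun n => φ (seq n)) atTop (𝓝 a) :=
    tendsto_atTop_ciInf hanti hbdd'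
  have hale : ∀ n, a ≤ φ (seq n) := fun n => ciInf_le hbdd' n
  have hcauchy : ∀ l : Λ, ∀ ε : ℝ, 0 < ε → ∃ N : ℕ, ∀ i j : ℕ, N ≤ i → i ≤ j →
      e l (seq i) (seq j) < ε := by
    intro l ε hε
    have hev : ∀ᶠ i in atTop, φ (seq i) < a + ε :=
      ha.eventually_lt_const (lt_add_of_pos_right a hε)
    obtain ⟨N, hN⟩ := eventually_atTop.1 hev
    refine ⟨N, fun i j hNi hij => ?_⟩
    have h1 := hchain i j hij l
    have h2 := hale j
    have h3 := hN i hNi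
    linarith
  obtain ⟨v, hv⟩ := hcomplete seq hcauchy hdesc
  have hφv : φ v ≤ a := hlsc seq v hv hdesc a ha
  have hvS : ∀ n, v ∈ S (seq n) := by
    intro n l
    obtain ⟨m, _, hm⟩ := htri l
    have key : e l (seq n) v ≤ φ (seq n) - a := by
      have hb : ∀ᶠ j in atTop,
          e l (seq n) v ≤ (φ (seq n) - φ (seq j)) + e m (seq j) v := by
        refine eventually_atTop.2 ⟨n, fun j hj => ?_⟩
        calc e l (seq n) v ≤ e m (seq n) (seq j) + e m (seq j) v := hm _ _ _
          _ ≤ (φ (seq n) - φ (seq j)) + e m (seq j) v :=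
            add_le_add_left (hchain n j hj m) _
      have hlim : Tendsto (fun j => (φ (seq n) - φ (seq j)) + e m (seq j) v)
          atTop (𝓝 ((φ (seq n) - a) + 0)) :=
        (tendsto_const_nhds.sub ha).add (hv m)
      have := ge_of_tendsto hlim hb
      linarith [this]
    linarith
  refine ⟨v, fun l => hvS 0 l, ?_⟩
  intro x hx
  by_contra h
  push_neg at h
  have hxS : x ∈ S v := fun m => h m
  have hxn : ∀ n, x ∈ S (seq n) := fun n => hStrans _ v x (hvS n) hxS
  have haφx : a ≤ φ x := by
    have hb : ∀ n, φ (seq (n+1)) ≤ φ x + (1/2 : ℝ)^n := by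
      intro n
      have h1 : sInf (φ '' S (seq n)) ≤ φ x :=
        csInf_le (hbdd _) ⟨x, hxn n, rfl⟩
      have := hinf n
      linarith
    have hlim1 : Tendsto (fun n => φ (seq (n+1))) atTop (𝓝 a) :=
      ha.comp (tendsto_add_atTop_nat 1)
    have hlim2 : Tendsto (fun n : ℕ => φ x + (1/2 : ℝ)^n) atTop (𝓝 (φ x + 0)) :=
      tendsto_const_nhds.add
        (tendsto_pow_atTop_nhds_zero_of_lt_one (by norm_num) (by norm_num))
    have := le_of_tendsto_of_tendsto' hlim1 hlim2 hb
    linarith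
  have hzero : ∀ l, e l v x = 0 := by
    intro l
    obtain ⟨m, _, hm⟩ := htri l
    have key : e l v x ≤ 0 := by
      have hb : ∀ᶠ n in atTop,
          e l v x ≤ e m (seq n) v + (φ (seq n) - φ x) := by
        refine Eventually.of_forall fun n => ?_
        calc e l v x ≤ e m v (seq n) + e m (seq n) x := hm _ _ _
          _ = e m (seq n) v + e m (seq n) x := by rw [hsym]
          _ ≤ e m (seq n) v + (φ (seq n) - φ x) :=
            add_le_add_right (hxn n m) _
      have hlim : Tendsto (fun n => e m (seq n) v + (φ (seq n) - φ x))
          atTop (𝓝 (0 + (a - φ x))) :=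
        (hv m).add (ha.sub tendsto_const_nhds)
      have := ge_of_tendsto hlim hb
      linarith
    exact le_antisymm key (hnn l v x)
  exact hx (hsuff x v (fun l => by rw [hsym]; exact hzero l))
end

section
/- The Brøndsted quasi-order on X defined by x ≤ y iff e_λ(x,y) ≤ φ(x) − φ(y) for all λ ∈ Λ is selfclosed with respect to E-convergence: if (xₙ) is ≤-ascending and E-converges to x, then xₙ ≤ x for all n. -/
open Filter Topology

/-- The Brøndsted quasi-order x ≤ y iff e_λ(x,y) ≤ φ(x) − φ(y) for all λ is
selfclosed under E-convergence: the E-limit of an ascending sequence is an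
upper bound of it. -/
theorem stmt_15 {X : Type*} {Λ : Type*} [Preorder Λ]
    (hdir : ∀ a b : Λ, ∃ c : Λ, a ≤ c ∧ b ≤ c)
    (e : Λ → X → X → ℝ)
    (hnn : ∀ l x y, 0 ≤ e l x y)
    (hrefl : ∀ l x, e l x x = 0)
    (hsym : ∀ l x y, e l x y = e l y x)
    (hsuff : ∀ x y, (∀ l, e l x y = 0) → x = y)
    (hmono : ∀ l m : Λ, l ≤ m → ∀ x y, e l x y ≤ e m x y)
    (htri : ∀ l : Λ, ∃ m : Λ, l ≤ m ∧ ∀ x y z, e l x z ≤ e m x y + e m y z)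
    (φ : X → ℝ) (hφ0 : ∀ x, 0 ≤ φ x)
    (hlsc : ∀ (s : ℕ → X) (x : X),
      (∀ l : Λ, Tendsto (fun n => e l (s n) x) atTop (𝓝 0)) →
      (∀ n, φ (s (n + 1)) ≤ φ (s n)) →
      ∀ a : ℝ, Tendsto (fun n => φ (s n)) atTop (𝓝 a) → φ x ≤ a)
    (s : ℕ → X)
    (hasc : ∀ n m : ℕ, n ≤ m → ∀ l : Λ, e l (s n) (s m) ≤ φ (s n) - φ (s m))
    (x : X)
    (hconv : ∀ l : Λ, Tendsto (fun n => e l (s n) x) atTop (𝓝 0)) :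
    ∀ n : ℕ, ∀ l : Λ, e l (s n) x ≤ φ (s n) - φ x := by
  intro n l
  -- φ ∘ s is antitone
  have hdesc : ∀ k, φ (s (k + 1)) ≤ φ (s k) := by
    intro k
    have h := hasc k (k + 1) (Nat.le_succ k) l
    have := hnn l (s k) (s (k + 1))
    linarith
  have hanti : Antitone (fun n => φ (s n)) :=
    antitone_nat_of_succ_le hdesc
  have hbdd : BddBelow (Set.range fun n => φ (s n)) :=
    ⟨0, by rintro _ ⟨n, rfl⟩; exact hφ0 _⟩
  set a : ℝ := ⨅ n, φ (s n) with ha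
  have hconva : Tendsto (fun n => φ (s n)) atTop (𝓝 a) :=
    tendsto_atTop_ciInf hanti hbdd
  have hφx : φ x ≤ a := hlsc s x hconv hdesc a hconva
  obtain ⟨m, hlm, hm⟩ := htri l
  -- for k ≥ n: e l (s n) x ≤ φ(s n) - φ(s k) + e m (s k) x
  have key : ∀ k, n ≤ k → e l (s n) x ≤ φ (s n) - φ (s k) + e m (s k) x := by
    intro k hk
    have h1 := hm (s n) (s k) x
    have h2 := hasc n k hk m
    linarith
  -- take limit k → ∞
  have hlim : Tendsto (fun k => φ (s n) - φ (s k) + e m (s k) x) atTop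
      (𝓝 (φ (s n) - a + 0)) :=
    ((tendsto_const_nhds.sub hconva).add (hconv m))
  have : e l (s n) x ≤ φ (s n) - a + 0 := by
    refine ge_of_tendsto hlim ?_
    filter_upwards [eventually_ge_atTop n] with k hk using key k hk
  linarith
end

section
/- For each λ ∈ Λ, define d_λ(x,y) = sup{f_i(x,y) : i ∈ λ} where λ ranges over nonempty finite subsets of I ordered by inclusion. Then (Λ,⊆) is a directed ordered set and the family D = (d_λ)_{λ∈Λ} is sufficient, Λ-monotone and Λ-triangular; i.e., every BMLO uniform space gives rise to a Fang uniform space with equivalent convergence and Cauchy notions. -/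
open Filter Topology

/-- From a BMLO uniform space (X,F) over index set I, the family
d_λ(x,y) = max_{i∈λ} f_i(x,y), λ ranging over nonempty finite subsets of I
ordered by inclusion, yields a Fang uniform space: (Λ,⊆) is directed and D is
sufficient, Λ-monotone and Λ-triangular; moreover F- and D- convergence and
Cauchy notions coincide. -/
theorem stmt_16 {X : Type*} {I : Type*} [Nonempty I]
    (f : I → X → X → ℝ)
    (hnn : ∀ i x y, 0 ≤ f i x y)
    (hrefl : ∀ i x, f i x x = 0)
    (hsym : ∀ i x y, f i x y = f i y x)
    (hsuff : ∀ x y, (∀ i, f i x y = 0) → x = y)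
    (htri : ∀ i : I, ∃ j k : I, ∀ x y z : X,
      f i x z ≤ f j x y + f k y z)
    (d : {s : Finset I // s.Nonempty} → X → X → ℝ)
    (hd : ∀ (l : {s : Finset I // s.Nonempty}) (x y : X),
      d l x y = l.1.sup' l.2 (fun i => f i x y)) :
    (∀ a b : {s : Finset I // s.Nonempty},
      ∃ c : {s : Finset I // s.Nonempty}, a.1 ⊆ c.1 ∧ b.1 ⊆ c.1) ∧
    (∀ x y, (∀ l : {s : Finset I // s.Nonempty}, d l x y = 0) → x = y) ∧
    (∀ l m : {s : Finset I // s.Nonempty}, l.1 ⊆ m.1 →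
      ∀ x y, d l x y ≤ d m x y) ∧
    (∀ l : {s : Finset I // s.Nonempty}, ∃ m : {s : Finset I // s.Nonempty},
      l.1 ⊆ m.1 ∧ ∀ x y z, d l x z ≤ d m x y + d m y z) ∧
    (∀ (s : ℕ → X) (x : X),
      (∀ i : I, Tendsto (fun n => f i (s n) x) atTop (𝓝 0)) ↔
      (∀ l : {s : Finset I // s.Nonempty},
        Tendsto (fun n => d l (s n) x) atTop (𝓝 0))) ∧
    (∀ s : ℕ → X,
      (∀ i : I, ∀ ε : ℝ, 0 < ε → ∃ N : ℕ, ∀ p q : ℕ, N ≤ p → p ≤ q →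
        f i (s p) (s q) < ε) ↔
      (∀ l : {s : Finset I // s.Nonempty}, ∀ ε : ℝ, 0 < ε →
        ∃ N : ℕ, ∀ p q : ℕ, N ≤ p → p ≤ q → d l (s p) (s q) < ε)) := by
  classical
  -- d of a singleton
  have hsingle : ∀ (i : I) (x y : X),
      d ⟨{i}, Finset.singleton_nonempty i⟩ x y = f i x y := by
    intro i x y
    rw [hd]
    simp
  have hdnn : ∀ (l : {s : Finset I // s.Nonempty}) (x y : X), 0 ≤ d l x y := by
    intro l x y
    rw [hd]
    obtain ⟨i, hi⟩ := l.2
    exact le_trans (hnn i x y) (Finset.le_sup' (fun i => f i x y) hi)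
  refine ⟨?_, ?_, ?_, ?_, ?_, ?_⟩
  · intro a b
    exact ⟨⟨a.1 ∪ b.1, Finset.Nonempty.mono Finset.subset_union_left a.2⟩,
      Finset.subset_union_left, Finset.subset_union_right⟩
  · intro x y h
    apply hsuff
    intro i
    have := h ⟨{i}, Finset.singleton_nonempty i⟩
    rwa [hsingle] at this
  · intro l m hlm x y
    rw [hd, hd]
    exact Finset.sup'_le _ _ fun i hi => Finset.le_sup' (fun i => f i x y) (hlm hi)
  · intro l
    choose j k hjk using htri
    refine ⟨⟨l.1 ∪ l.1.image j ∪ l.1.image k, Finset.Nonempty.mono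
      (subset_trans Finset.subset_union_left Finset.subset_union_left) l.2⟩,
      subset_trans Finset.subset_union_left Finset.subset_union_left, ?_⟩
    intro x y z
    rw [hd]
    apply Finset.sup'_le
    intro i hi
    refine le_trans (hjk i x y z) (add_le_add ?_ ?_)
    · rw [hd]
      exact Finset.le_sup' (fun j => f j x y) (Finset.mem_union_left _
        (Finset.mem_union_right _ (Finset.mem_image_of_mem j hi)))
    · rw [hd]
      exact Finset.le_sup' (fun j => f j y z) (Finset.mem_union_right _
        (Finset.mem_image_of_mem k hi))
  · intro s x
    constructor
    · intro h l
      rw [NormedAddCommGroup.tendsto_nhds_zero]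
      intro ε hε
      have : ∀ i ∈ l.1, ∀ᶠ n in atTop, f i (s n) x < ε := by
        intro i _
        have := (NormedAddCommGroup.tendsto_nhds_zero.mp (h i)) ε hε
        filter_upwards [this] with n hn
        calc f i (s n) x ≤ |f i (s n) x| := le_abs_self _
        _ < ε := hn
      have := (Filter.eventually_all_finset l.1).mpr this
      filter_upwards [this] with n hn
      rw [Real.norm_eq_abs, abs_of_nonneg (hdnn l (s n) x), hd]
      exact (Finset.sup'_lt_iff l.2).mpr fun i hi => hn i hi
    · intro h i
      have := h ⟨{i}, Finset.singleton_nonempty i⟩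
      simpa only [hsingle] using this
  · intro s
    constructor
    · intro h l ε hε
      choose N hN using fun i => h i ε hε
      refine ⟨l.1.sup N, fun p q hp hpq => ?_⟩
      rw [hd]
      apply (Finset.sup'_lt_iff l.2).mpr
      intro i hi
      exact hN i p q (le_trans (Finset.le_sup hi) hp) hpq
    · intro h i ε hε
      obtain ⟨N, hN⟩ := h ⟨{i}, Finset.singleton_nonempty i⟩ ε hε
      exact ⟨N, fun p q hp hpq => by rw [← hsingle i]; exact hN p q hp hpq⟩
end

section
/- For each u ∈ X there exists v ∈ X with d(u,v) ≤ φ(u) − φ(v), and d(v,x) > φ(v) − φ(x) for all x ≠ v. -/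
open Filter Topology

/-- Weakened-hypothesis Ekeland variational principle: with d φ-complete
and φ descending d-lsc, for each u there is v with d(u,v) ≤ φ(u) − φ(v) and
d(v,x) > φ(v) − φ(x) for all x ≠ v. -/
theorem stmt_17 {X : Type*} [MetricSpace X]
    (φ : X → ℝ) (hφ0 : ∀ x, 0 ≤ φ x)
    (hcomplete : ∀ s : ℕ → X, CauchySeq s →
      (∀ n, φ (s (n + 1)) ≤ φ (s n)) →
      ∃ x : X, Tendsto s atTop (𝓝 x))
    (hlsc : ∀ (s : ℕ → X) (x : X), Tendsto s atTop (𝓝 x) →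
      (∀ n, φ (s (n + 1)) ≤ φ (s n)) →
      ∀ a : ℝ, Tendsto (fun n => φ (s n)) atTop (𝓝 a) → φ x ≤ a)
    (u : X) :
    ∃ v : X, dist u v ≤ φ u - φ v ∧
      ∀ x : X, x ≠ v → dist v x > φ v - φ x := by
  classical
  set S : X → Set X := fun y => {z | dist y z ≤ φ y - φ z} with hS
  have hself : ∀ y, y ∈ S y := fun y => by simp [hS]
  have htrans : ∀ {x y z : X}, y ∈ S x → z ∈ S y → z ∈ S x := by
    intro x y z hy hz
    simp only [hS, Set.mem_setOf_eq] at *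
    have := dist_triangle x y z
    linarith
  set i : X → ℝ := fun y => sInf (φ '' S y) with hi
  have hne : ∀ y, (φ '' S y).Nonempty := fun y => ⟨φ y, y, hself y, rfl⟩
  have hbdd : ∀ y, BddBelow (φ '' S y) := fun y => ⟨0, by rintro _ ⟨z, _, rfl⟩; exact hφ0 z⟩
  have hile : ∀ y, i y ≤ φ y := fun y => csInf_le (hbdd y) ⟨y, hself y, rfl⟩
  have himem : ∀ y z, z ∈ S y → i y ≤ φ z := fun y z hz => csInf_le (hbdd y) ⟨z, hz, rfl⟩
  have hpick : ∀ y, ∃ z, z ∈ S y ∧ 2 * φ z ≤ φ y + i y := by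
    intro y
    rcases eq_or_lt_of_le (hile y) with h | h
    · exact ⟨y, hself y, by linarith⟩
    · have hlt : sInf (φ '' S y) < (φ y + i y) / 2 := by
        simp only [hi] at *; linarith
      obtain ⟨w, hw, hwlt⟩ := exists_lt_of_csInf_lt (hne y) hlt
      obtain ⟨z, hz, rfl⟩ := hw
      exact ⟨z, hz, by linarith⟩
  choose f hf1 hf2 using hpick
  set s : ℕ → X := fun n => f^[n] u with hs
  have hstep : ∀ n, s (n + 1) = f (s n) := fun n => Function.iterate_succ_apply' f n u
  have hmem : ∀ n, s (n + 1) ∈ S (s n) := fun n => (hstep n) ▸ hf1 (s n)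
  have hdec : ∀ n, φ (s (n + 1)) ≤ φ (s n) := by
    intro n
    have h1 := hmem n
    have h2 := dist_nonneg (x := s n) (y := s (n + 1))
    simp only [hS, Set.mem_setOf_eq] at h1
    linarith
  have hanti : Antitone fun n => φ (s n) := antitone_nat_of_succ_le hdec
  have hchain : ∀ n m, n ≤ m → s m ∈ S (s n) := by
    intro n m h
    induction h with
    | refl => exact hself _
    | step h ih => exact htrans ih (hmem _)
  -- limit of φ ∘ s
  obtain ⟨a, ha⟩ : ∃ a, Tendsto (fun n => φ (s n)) atTop (𝓝 a) :=
    ⟨_, tendsto_atTop_ciInf hanti ⟨0, by rintro _ ⟨n, rfl⟩; exact hφ0 _⟩⟩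
  have hale : ∀ n, a ≤ φ (s n) := fun n =>
    le_of_tendsto ha (Filter.eventually_atTop.2 ⟨n, fun m hm => hanti hm⟩)
  -- Cauchy
  have hcauchy : CauchySeq s := by
    rw [Metric.cauchySeq_iff']
    intro ε hε
    obtain ⟨N, hN⟩ := (Metric.tendsto_atTop.1 ha) ε hε
    refine ⟨N, fun n hn => ?_⟩
    have h1 := hchain N n hn
    simp only [hS, Set.mem_setOf_eq] at h1
    have h2 := hN N le_rfl
    rw [Real.dist_eq, abs_lt] at h2
    have := hale n
    rw [dist_comm]
    linarith
  obtain ⟨v, hv⟩ := hcomplete s hcauchy hdec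
  have hφv : φ v ≤ a := hlsc s v hv hdec a ha
  -- v ∈ S (s n) for every n
  have hSv : ∀ n, v ∈ S (s n) := by
    intro n
    have hd : Tendsto (fun m => dist (s n) (s m)) atTop (𝓝 (dist (s n) v)) :=
      (tendsto_const_nhds (x := s n)).dist hv
    have h1 : dist (s n) v ≤ φ (s n) - a := by
      refine le_of_tendsto_of_tendsto hd (tendsto_const_nhds.sub ha)
        (Filter.eventually_atTop.2 ⟨n, fun m hm => ?_⟩)
      have h1 := hchain n m hm
      simp only [hS, Set.mem_setOf_eq] at h1
      show dist (s n) (s m) ≤ φ (s n) - φ (s m)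
      linarith
    simp only [hS, Set.mem_setOf_eq]
    linarith
  have h0 := hSv 0
  simp only [hS, Set.mem_setOf_eq, hs, Function.iterate_zero_apply] at h0
  refine ⟨v, h0, ?_⟩
  intro x hx
  by_contra hle
  push_neg at hle
  have hxSv : x ∈ S v := by simpa [hS, Set.mem_setOf_eq] using hle
  have hkey : ∀ n, dist v x ≤ φ (s n) - φ (s (n + 1)) := by
    intro n
    have hxSn : x ∈ S (s n) := htrans (hSv n) hxSv
    have h1 := himem (s n) x hxSn
    have h2 := hf2 (s n)
    rw [← hstep n] at h2
    have h3 : a ≤ φ (s (n + 1)) := hale (n + 1)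
    simp only [hS, Set.mem_setOf_eq] at hxSv
    linarith
  have hzero : Tendsto (fun n => φ (s n) - φ (s (n + 1))) atTop (𝓝 0) := by
    have := ha.sub (ha.comp (tendsto_add_atTop_nat 1))
    simpa using this
  have : dist v x ≤ 0 := ge_of_tendsto' hzero hkey
  exact hx (by symm; exact dist_le_zero.1 this)
end

section
/- The set of ≤_{(d,φ)}-maximal elements is nonempty and cofinal: for each u ∈ X there exists a ≤_{(d,φ)}-maximal v with u ≤_{(d,φ)} v; i.e., the Brøndsted order is a Zorn order. -/
/-- Discrete Lipschitz countable version of EVP: in a discrete bounded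
complete metric space, for a nonexpansive φ ≥ 0 with countable range whose
Brøndsted order has the inf-lattice property, the Brøndsted order
x ≤ y iff d(x,y) ≤ φ(x) − φ(y) is a Zorn order: the set of maximal elements
is cofinal. -/
theorem stmt_19 {X : Type*} [MetricSpace X] [CompleteSpace X]
    (hdisc : ∀ x : X, ∃ ρ > (0 : ℝ), ∀ u : X, dist x u < ρ → u = x)
    (hbdd : ∃ C : ℝ, ∀ x y : X, dist x y ≤ C)
    (φ : X → ℝ) (hφ0 : ∀ x, 0 ≤ φ x)
    (hlip : ∀ x y : X, |φ x - φ y| ≤ dist x y)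
    (hcount : (Set.range φ).Countable)
    (r : X → X → Prop)
    (hr : ∀ x y : X, r x y ↔ dist x y ≤ φ x - φ y)
    (hinf : ∀ x y : X, ∃ m : X, r m x ∧ r m y ∧
      ∀ z : X, r z x → r z y → r z m) :
    ∀ u : X, ∃ v : X, r u v ∧ ∀ w : X, r v w → w = v := by
  intro u
  have rrefl : ∀ x : X, r x x := fun x => (hr x x).2 (by simp)
  have rtrans : ∀ a b c : X, r a b → r b c → r a c := by
    intro a b c hab hbc
    rw [hr] at hab hbc ⊢
    calc dist a c ≤ dist a b + dist b c := dist_triangle a b c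
      _ ≤ (φ a - φ b) + (φ b - φ c) := add_le_add hab hbc
      _ = φ a - φ c := by ring
  -- the set of values of φ on successors of x
  set S : X → Set ℝ := fun x => φ '' {w | r x w} with hS
  have hSne : ∀ x, (S x).Nonempty := fun x => ⟨φ x, x, rrefl x, rfl⟩
  have hSbd : ∀ x, BddBelow (S x) := by
    intro x
    refine ⟨0, ?_⟩
    rintro t ⟨w, -, rfl⟩
    exact hφ0 w
  have key : ∀ x : X, ∀ n : ℕ, ∃ y : X, r x y ∧
      φ y < sInf (S x) + (1/2)^n := by
    intro x n
    obtain ⟨t, ⟨y, hy, rfl⟩, ht⟩ :=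
      Real.lt_sInf_add_pos (hSne x) (ε := (1/2)^n) (by positivity)
    exact ⟨y, hy, ht⟩
  -- the iteration
  let seq : ℕ → X := fun n => Nat.rec u (fun k x => (key x k).choose) n
  have hseq0 : seq 0 = u := rfl
  have hstep : ∀ n, r (seq n) (seq (n+1)) ∧
      φ (seq (n+1)) < sInf (S (seq n)) + (1/2)^n := fun n =>
    (key (seq n) n).choose_spec
  have hmono : ∀ m n : ℕ, m ≤ n → r (seq m) (seq n) := by
    intro m n hmn
    induction n with
    | zero => simpa [Nat.le_zero.1 hmn] using rrefl (seq 0)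
    | succ k ih =>
      rcases Nat.lt_or_ge m (k+1) with h | h
      · exact rtrans _ _ _ (ih (Nat.lt_succ_iff.1 h)) (hstep k).1
      · have : m = k + 1 := le_antisymm hmn h
        simpa [this] using rrefl (seq (k+1))
  have hdistφ : ∀ m n : ℕ, m ≤ n → dist (seq m) (seq n) ≤ φ (seq m) - φ (seq n) :=
    fun m n h => (hr _ _).1 (hmono m n h)
  have hanti : Antitone fun n => φ (seq n) := by
    apply antitone_nat_of_succ_le
    intro n
    have := hdistφ n (n+1) (Nat.le_succ n)
    linarith [dist_nonneg (x := seq n) (y := seq (n+1))]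
  -- φ ∘ seq converges, hence is Cauchy, hence seq is Cauchy
  have hφtend : ∃ L : ℝ, Filter.Tendsto (fun n => φ (seq n)) Filter.atTop (nhds L) := by
    refine ⟨⨅ n, φ (seq n), tendsto_atTop_ciInf hanti ⟨0, ?_⟩⟩
    rintro t ⟨n, rfl⟩
    exact hφ0 _
  obtain ⟨L, hL⟩ := hφtend
  have hφcauchy : CauchySeq fun n => φ (seq n) := hL.cauchySeq
  have hcauchy : CauchySeq seq := by
    rw [Metric.cauchySeq_iff]
    intro ε hε
    obtain ⟨N, hN⟩ := Metric.cauchySeq_iff.1 hφcauchy ε hε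
    refine ⟨N, fun m hm n hn => ?_⟩
    rcases le_total n m with h | h
    · calc dist (seq m) (seq n) = dist (seq n) (seq m) := dist_comm _ _
        _ ≤ φ (seq n) - φ (seq m) := hdistφ n m h
        _ ≤ |φ (seq n) - φ (seq m)| := le_abs_self _
        _ = dist (φ (seq n)) (φ (seq m)) := (Real.dist_eq _ _).symm
        _ < ε := hN n hn m hm
    · calc dist (seq m) (seq n) ≤ φ (seq m) - φ (seq n) := hdistφ m n h
        _ ≤ |φ (seq m) - φ (seq n)| := le_abs_self _
        _ = dist (φ (seq m)) (φ (seq n)) := (Real.dist_eq _ _).symm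
        _ < ε := hN m hm n hn
  obtain ⟨v, hv⟩ := cauchySeq_tendsto_of_complete hcauchy
  have hφcont : Filter.Tendsto (fun n => φ (seq n)) Filter.atTop (nhds (φ v)) := by
    have hLip : LipschitzWith 1 φ := by
      apply LipschitzWith.of_dist_le_mul
      intro x y
      rw [Real.dist_eq]
      simpa using hlip x y
    exact (hLip.continuous.tendsto v).comp hv
  have hLv : L = φ v := tendsto_nhds_unique hL hφcont
  subst hLv
  -- r (seq n) v for all n
  have hrnv : ∀ n, r (seq n) v := by
    intro n
    rw [hr]
    have h1 : Filter.Tendsto (fun m => dist (seq n) (seq m)) Filter.atTop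
        (nhds (dist (seq n) v)) := (tendsto_const_nhds.dist hv)
    have h2 : Filter.Tendsto (fun m => φ (seq n) - φ (seq m)) Filter.atTop
        (nhds (φ (seq n) - φ v)) := tendsto_const_nhds.sub hL
    refine le_of_tendsto_of_tendsto h1 h2 ?_
    exact Filter.eventually_atTop.mpr ⟨n, fun m hm => hdistφ n m hm⟩
  refine ⟨v, hseq0 ▸ hrnv 0, ?_⟩
  intro w hw
  have hφw : ∀ n, φ (seq (n+1)) < φ w + (1/2)^n := by
    intro n
    have hmem : φ w ∈ S (seq n) := ⟨w, rtrans _ _ _ (hrnv n) hw, rfl⟩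
    have := (hstep n).2
    have h2 : sInf (S (seq n)) ≤ φ w := csInf_le (hSbd _) hmem
    linarith
  have hdvw : dist v w ≤ φ v - φ w := (hr v w).1 hw
  have hle : dist v w ≤ 0 := by
    have htend : Filter.Tendsto (fun n : ℕ => φ v - φ (seq (n+1)) + (1/2)^n)
        Filter.atTop (nhds (φ v - φ v + 0)) := by
      refine Filter.Tendsto.add (tendsto_const_nhds.sub ?_) ?_
      · exact hL.comp (Filter.tendsto_add_atTop_nat 1)
      · exact tendsto_pow_atTop_nhds_zero_of_lt_one (by norm_num) (by norm_num)
    have hbound : ∀ n : ℕ, dist v w ≤ φ v - φ (seq (n+1)) + (1/2)^n := by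
      intro n
      have := hφw n
      linarith
    have := le_of_tendsto_of_tendsto' (f := fun _ : ℕ => dist v w)
      tendsto_const_nhds htend hbound
    simpa using this
  have : dist v w = 0 := le_antisymm hle dist_nonneg
  exact (dist_eq_zero.1 this).symm
end
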